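/- Let v(t,x) := ½(e^{r(T−t)}x + g₁(t))². For every (t,x) ∈ (0,T)×ℝ with e^{r(T−t)}x + g₁(t) > 0, the function v is twice continuously differentiable near (t,x), and ∂ₜv(t,x) + inf over (q,π) ∈ [0,∞)×[0,∞) of G(t,x,q,π,∂ₓv(t,x),∂ₓₓv(t,x)) = 0, with the infimum attained at (q,π) = (0,0). -/

import Mathlib

open Real Set

/-- in the region e^{r(T−t)}x + g₁(t) > 0, v(t,x) = ½(e^{r(T−t)}x+g₁(t))²
is C² near (t,x) and solves the HJB equation there, the infimum being attained at (0,0). -/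
theorem stmt_4
    (T r μ σ a b η θ d γ : ℝ)
    (hT : 0 < T) (hr : 0 < r) (hσ : 0 < σ) (ha : 0 < a) (hb : 0 < b)
    (hη : 0 < η) (hμr : r < μ)
    (f : ℝ) (hf : f = a * θ - a * η + (d - γ) * r)
    (g₁ : ℝ → ℝ) (hg₁ : ∀ t, g₁ t = f * (exp (r * (T - t)) - 1) / r)
    (G : ℝ → ℝ → ℝ → ℝ → ℝ → ℝ → ℝ)
    (hG : ∀ t x q pi p P, G t x q pi p P
      = p * (r * x + a * η * q + (μ - r) * pi + f)
        + (1 / 2) * P * (b ^ 2 * q ^ 2 + σ ^ 2 * pi ^ 2))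
    (v : ℝ → ℝ → ℝ)
    (hv : ∀ t x, v t x = (1 / 2) * (exp (r * (T - t)) * x + g₁ t) ^ 2)
    (t x : ℝ) (ht : t ∈ Ioo (0 : ℝ) T) (hx : 0 < exp (r * (T - t)) * x + g₁ t) :
    ContDiffAt ℝ 2 (fun p : ℝ × ℝ => v p.1 p.2) (t, x) ∧
    IsLeast {w : ℝ | ∃ q pi : ℝ, 0 ≤ q ∧ 0 ≤ pi ∧
        w = G t x q pi (deriv (fun y => v t y) x) (deriv (deriv (fun y => v t y)) x)}
      (G t x 0 0 (deriv (fun y => v t y) x) (deriv (deriv (fun y => v t y)) x)) ∧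
    deriv (fun s => v s x) t
      + G t x 0 0 (deriv (fun y => v t y) x) (deriv (deriv (fun y => v t y)) x) = 0 := by
  have hr0 : r ≠ 0 := ne_of_gt hr
  set E := exp (r * (T - t)) with hE
  set c := g₁ t with hc
  have hEpos : 0 < E := exp_pos _
  -- spatial derivatives
  have hd1 : ∀ y : ℝ, HasDerivAt (fun y => v t y) (E * (E * y + c)) y := by
    intro y
    have h1 : HasDerivAt (fun y : ℝ => E * y + c) E y := by
      simpa using ((hasDerivAt_id y).const_mul E).add_const c
    have h2 := (h1.pow 2).const_mul (1/2 : ℝ)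
    have : (fun y : ℝ => (1/2 : ℝ) * (E * y + c) ^ 2) = fun y => v t y := by
      funext z; rw [hv]
    simp only [Pi.pow_apply, Nat.reduceSub, pow_one, Nat.cast_ofNat] at h2
    rw [this] at h2
    refine h2.congr_deriv ?_
    ring
  have hD1 : deriv (fun y => v t y) x = E * (E * x + c) := (hd1 x).deriv
  have hD1' : deriv (fun y => v t y) = fun y => E * (E * y + c) := by
    funext y; exact (hd1 y).deriv
  have hD2 : deriv (deriv (fun y => v t y)) x = E ^ 2 := by
    rw [hD1']
    have h3 : HasDerivAt (fun y : ℝ => E * (E * y + c)) (E ^ 2) x := by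
      have h1 : HasDerivAt (fun y : ℝ => E * y + c) E x := by
        simpa using ((hasDerivAt_id x).const_mul E).add_const c
      have := h1.const_mul E
      beta_reduce at this
      refine this.congr_deriv ?_; ring
    exact h3.deriv
  -- time derivative
  have hexp : HasDerivAt (fun s : ℝ => exp (r * (T - s))) (E * (-r)) t := by
    have hlin : HasDerivAt (fun s : ℝ => r * (T - s)) (-r) t := by
      simpa using ((hasDerivAt_id t).const_sub T).const_mul r
    exact hlin.exp
  have hu : HasDerivAt (fun s : ℝ => exp (r * (T - s)) * x + f * (exp (r * (T - s)) - 1) / r)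
      (E * (-r) * x + f * (E * (-r)) / r) t := by
    exact (hexp.mul_const x).add (((hexp.sub_const 1).const_mul f).div_const r)
  have hDt : deriv (fun s => v s x) t
      = (E * x + c) * (E * (-r) * x + f * (E * (-r)) / r) := by
    have h2 := (hu.pow 2).const_mul (1/2 : ℝ)
    have heq : (fun s : ℝ => (1/2 : ℝ) * (exp (r * (T - s)) * x + f * (exp (r * (T - s)) - 1) / r) ^ 2)
        = fun s => v s x := by
      funext s; rw [hv, hg₁]
    simp only [Pi.pow_apply, Nat.reduceSub, pow_one, Nat.cast_ofNat] at h2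
    rw [heq] at h2
    rw [h2.deriv, hc, hg₁, ← hE]
    push_cast
    ring
  refine ⟨?_, ⟨?_, ?_⟩, ?_⟩
  · -- C²
    have : (fun p : ℝ × ℝ => v p.1 p.2)
        = fun p : ℝ × ℝ => (1/2 : ℝ) * (exp (r * (T - p.1)) * p.2 + f * (exp (r * (T - p.1)) - 1) / r) ^ 2 := by
      funext p; rw [hv, hg₁]
    rw [this]
    have : ContDiff ℝ 2 (fun p : ℝ × ℝ => (1/2 : ℝ) * (exp (r * (T - p.1)) * p.2 + f * (exp (r * (T - p.1)) - 1) / r) ^ 2) := by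
      fun_prop (disch := intros; exact hr0)
    exact this.contDiffAt
  · exact ⟨0, 0, le_refl 0, le_refl 0, rfl⟩
  · rintro w ⟨q, pi, hq, hpi, rfl⟩
    rw [hG, hG, hD1, hD2]
    have hp : 0 < E * (E * x + c) := mul_pos hEpos hx
    nlinarith [mul_pos ha hη, sq_nonneg q, sq_nonneg pi, mul_nonneg hq hpi,
      mul_nonneg (mul_nonneg (mul_pos ha hη).le hp.le) hq,
      mul_nonneg (mul_nonneg (sub_pos.mpr hμr).le hp.le) hpi,
      mul_nonneg (mul_nonneg (pow_pos hb 2).le (sq_nonneg E)) (sq_nonneg q),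
      mul_nonneg (mul_nonneg (pow_pos hσ 2).le (sq_nonneg E)) (sq_nonneg pi)]
  · rw [hDt, hG, hD1, hD2]
    field_simp
    ring
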